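/- Let h : ℝ → ℂ and let h_n : ℝ → ℂ (n ∈ ℕ) be differentiable functions. Suppose there are constants C₁, C₂ > 0, η₁ ∈ (0,1) and R > 1 such that |h_n(x) − h(x)| ≤ C₁·η₁^n and |h_n′(x)| ≤ C₂·R^n for all x ∈ ℝ and all n ∈ ℕ. Then there is C > 0 such that |h(x) − h(y)| ≤ C·|x−y|^r for all x, y ∈ ℝ with |x − y| ≤ 1, where r = (log η₁)/(log(η₁/R)) ∈ (0,1). -/
import Mathlib

/-- If differentiable functions h_n converge to h with
|h_n(x) − h(x)| ≤ C₁·η₁^n and |h_n′(x)| ≤ C₂·R^n (η₁ ∈ (0,1), R > 1), then h is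
Hölder with exponent r = log η₁ / log(η₁/R) ∈ (0,1) on pairs of points at distance
at most 1. -/
theorem statement17 (h : ℝ → ℂ) (hn : ℕ → ℝ → ℂ) (C₁ C₂ η₁ R : ℝ)
    (hC₁ : 0 < C₁) (hC₂ : 0 < C₂) (hη₁ : η₁ ∈ Set.Ioo (0 : ℝ) 1) (hR : 1 < R)
    (hdiff : ∀ n : ℕ, ∀ x : ℝ, DifferentiableAt ℝ (hn n) x)
    (happrox : ∀ n : ℕ, ∀ x : ℝ, ‖hn n x - h x‖ ≤ C₁ * η₁ ^ n)
    (hderiv : ∀ n : ℕ, ∀ x : ℝ, ‖deriv (hn n) x‖ ≤ C₂ * R ^ n) :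
    Real.log η₁ / Real.log (η₁ / R) ∈ Set.Ioo (0 : ℝ) 1 ∧
    ∃ C > (0 : ℝ), ∀ x y : ℝ, |x - y| ≤ 1 →
      ‖h x - h y‖ ≤ C * |x - y| ^ (Real.log η₁ / Real.log (η₁ / R)) := by
  obtain ⟨hη₀, hη₁lt⟩ := hη₁
  set q : ℝ := η₁ / R with hq
  have hq0 : 0 < q := div_pos hη₀ (lt_trans one_pos hR)
  have hq1 : q < 1 := by
    rw [hq, div_lt_one (lt_trans one_pos hR)]; exact lt_trans hη₁lt hR
  have hlogη : Real.log η₁ < 0 := Real.log_neg hη₀ hη₁lt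
  have hlogR : 0 < Real.log R := Real.log_pos hR
  have hlogq : Real.log q < 0 := Real.log_neg hq0 hq1
  have hlogq_eq : Real.log q = Real.log η₁ - Real.log R :=
    Real.log_div (ne_of_gt hη₀) (by positivity)
  set r : ℝ := Real.log η₁ / Real.log q with hr
  have hr0 : 0 < r := div_pos_of_neg_of_neg hlogη hlogq
  have hr1 : r < 1 := by
    rw [hr, div_lt_one_of_neg hlogq, hlogq_eq]; linarith
  refine ⟨⟨hr0, hr1⟩, ?_⟩
  refine ⟨2 * C₁ + C₂ / q, by positivity, ?_⟩
  intro x y hxy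
  rcases eq_or_ne x y with rfl | hne
  · simp [Real.zero_rpow (ne_of_gt hr0)]
  have ht0 : 0 < |x - y| := abs_pos.2 (sub_ne_zero.2 hne)
  set t : ℝ := |x - y| with htdef
  have hlogt : Real.log t ≤ 0 := Real.log_nonpos (le_of_lt ht0) hxy
  -- choose n
  set n : ℕ := ⌈Real.log t / Real.log q⌉₊ with hndef
  have hquot : 0 ≤ Real.log t / Real.log q := by
    have := div_nonneg (neg_nonneg.2 hlogt) (neg_nonneg.2 hlogq.le)
    rwa [neg_div_neg_eq] at this
  have h1 : Real.log t / Real.log q ≤ (n : ℝ) := Nat.le_ceil _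
  have h2 : (n : ℝ) < Real.log t / Real.log q + 1 := Nat.ceil_lt_add_one hquot
  have hnq_le : (n : ℝ) * Real.log q ≤ Real.log t := by
    rw [div_le_iff_of_neg hlogq] at h1; linarith [h1]
  have hnq_ge : Real.log t + Real.log q ≤ (n : ℝ) * Real.log q := by
    have hlt := (mul_lt_mul_right_of_neg hlogq).2 h2
    have h3 : (Real.log t / Real.log q + 1) * Real.log q = Real.log t + Real.log q := by
      rw [add_mul, one_mul, div_mul_cancel₀ _ (ne_of_lt hlogq)]
    linarith
  -- key inequalities
  have hqn : q ^ n ≤ t := by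
    have : q ^ n = Real.exp ((n : ℝ) * Real.log q) := by
      rw [← Real.log_pow, Real.exp_log (by positivity)]
    rw [this, ← Real.exp_log ht0]
    exact Real.exp_le_exp.2 hnq_le
  have hqn' : q * t ≤ q ^ n := by
    have : q ^ n = Real.exp ((n : ℝ) * Real.log q) := by
      rw [← Real.log_pow, Real.exp_log (by positivity)]
    rw [this]
    calc q * t = Real.exp (Real.log t + Real.log q) := by
          rw [Real.exp_add, Real.exp_log ht0, Real.exp_log hq0]; ring
      _ ≤ _ := Real.exp_le_exp.2 hnq_ge
  have hηn : η₁ ^ n ≤ t ^ r := by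
    have hlhs : η₁ ^ n = Real.exp ((n : ℝ) * Real.log η₁) := by
      rw [← Real.log_pow, Real.exp_log (by positivity)]
    have hrhs : t ^ r = Real.exp (r * Real.log t) := by
      rw [Real.rpow_def_of_pos ht0, mul_comm]
    rw [hlhs, hrhs]
    apply Real.exp_le_exp.2
    have : Real.log η₁ = r * Real.log q := by
      rw [hr, div_mul_cancel₀ _ (ne_of_lt hlogq)]
    rw [this]
    calc (n : ℝ) * (r * Real.log q) = r * ((n : ℝ) * Real.log q) := by ring
      _ ≤ r * Real.log t := by
          exact mul_le_mul_of_nonneg_left hnq_le (le_of_lt hr0)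
  have hRn : R ^ n * t ≤ t ^ r / q := by
    have hRq : R ^ n = η₁ ^ n / q ^ n := by
      rw [hq, div_pow]
      field_simp
    rw [hRq]
    rw [div_mul_eq_mul_div, div_le_div_iff₀ (by positivity) hq0]
    calc η₁ ^ n * t * q = η₁ ^ n * (q * t) := by ring
      _ ≤ η₁ ^ n * q ^ n := by
          exact mul_le_mul_of_nonneg_left hqn' (by positivity)
      _ ≤ t ^ r * q ^ n := by
          exact mul_le_mul_of_nonneg_right hηn (by positivity)
  -- Lipschitz bound for hn n via MVT
  have hlip : ‖hn n x - hn n y‖ ≤ C₂ * R ^ n * t := by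
    have := convex_univ.norm_image_sub_le_of_norm_deriv_le (𝕜 := ℝ) (f := hn n)
      (fun z _ => hdiff n z) (fun z _ => hderiv n z)
      (Set.mem_univ y) (Set.mem_univ x)
    calc ‖hn n x - hn n y‖ ≤ C₂ * R ^ n * ‖x - y‖ := this
      _ = C₂ * R ^ n * t := by rw [Real.norm_eq_abs]
  calc ‖h x - h y‖ = ‖(h x - hn n x) + (hn n x - hn n y) + (hn n y - h y)‖ := by ring_nf
    _ ≤ ‖h x - hn n x‖ + ‖hn n x - hn n y‖ + ‖hn n y - h y‖ := by
        exact le_trans (norm_add_le _ _) (by gcongr; exact norm_add_le _ _)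
    _ ≤ C₁ * η₁ ^ n + C₂ * R ^ n * t + C₁ * η₁ ^ n := by
        have e1 : ‖h x - hn n x‖ ≤ C₁ * η₁ ^ n := by rw [norm_sub_rev]; exact happrox n x
        exact add_le_add (add_le_add e1 hlip) (happrox n y)
    _ ≤ C₁ * t ^ r + C₂ * (t ^ r / q) + C₁ * t ^ r := by
        have h1 : C₂ * R ^ n * t ≤ C₂ * (t ^ r / q) := by
          rw [mul_assoc]; exact mul_le_mul_of_nonneg_left hRn (le_of_lt hC₂)
        gcongr
    _ = (2 * C₁ + C₂ / q) * t ^ r := by ring
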